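/- For any integers 0 < d ≤ r ≤ n, the following identity holds: e_d(x_1,...,x_r) = (-1)^d · ẽ_d(x_{r+1},...,x_n) + Σ_{t=1}^{d} (-1)^{t+1} · e_{d-t}(x_{t+1},...,x_r) · ẽ_t(x_t,...,x_n). -/

import Mathlib

open MvPolynomial

/-- The index set of variables `x_a, x_{a+1}, ..., x_b` (1-indexed) among `x_1, ..., x_n`. -/
def seg (n a b : ℕ) : Finset (Fin n) :=
  Finset.univ.filter fun i => a ≤ (i : ℕ) + 1 ∧ (i : ℕ) + 1 ≤ b

/-- Truncated elementary symmetric polynomial of degree `d` in the variables indexed by `S`. -/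
noncomputable def ee (n : ℕ) (d : ℤ) (S : Finset (Fin n)) : MvPolynomial (Fin n) ℤ :=
  if 0 ≤ d then ∑ A ∈ S.powersetCard d.toNat, ∏ i ∈ A, X i else 0

/-- Truncated complete homogeneous symmetric polynomial of degree `d` in variables indexed by `S`. -/
noncomputable def te (n : ℕ) (d : ℤ) (S : Finset (Fin n)) : MvPolynomial (Fin n) ℤ :=
  if 0 ≤ d then ∑ m ∈ S.sym d.toNat, ((m : Multiset (Fin n)).map X).prod else 0

lemma seg_insert {n a b : ℕ} (h1 : 1 ≤ a) (hab : a ≤ b) (hbn : b ≤ n) :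
    seg n a b = insert (⟨a - 1, by omega⟩ : Fin n) (seg n (a + 1) b) := by
  ext i
  simp only [seg, Finset.mem_insert, Finset.mem_filter, Finset.mem_univ, true_and, Fin.ext_iff]
  omega

lemma not_mem_seg {n a b : ℕ} (h1 : 1 ≤ a) (h : a - 1 < n) :
    (⟨a - 1, h⟩ : Fin n) ∉ seg n (a + 1) b := by
  simp only [seg, Finset.mem_filter, Finset.mem_univ, true_and]
  omega

lemma seg_card {n a b : ℕ} (h1 : 1 ≤ a) (hbn : b ≤ n) :
    (seg n a b).card = b + 1 - a := by
  rw [← Finset.card_image_of_injective (seg n a b) Fin.val_injective]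
  have himg : (seg n a b).image Fin.val = Finset.Ico (a-1) b := by
    ext x
    simp only [Finset.mem_image, seg, Finset.mem_filter, Finset.mem_univ, true_and,
      Finset.mem_Ico]
    constructor
    · rintro ⟨i, hi, rfl⟩; omega
    · intro hx
      refine ⟨⟨x, by omega⟩, ⟨?_, ?_⟩, rfl⟩ <;> simp only [Fin.val_mk] <;> omega
  rw [himg, Nat.card_Ico]; omega

lemma ee_zero (n : ℕ) (S : Finset (Fin n)) : ee n 0 S = 1 := by
  simp [ee]

lemma ee_neg {n : ℕ} {k : ℤ} (hk : k < 0) (S : Finset (Fin n)) : ee n k S = 0 := by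
  rw [ee, if_neg (by omega)]

lemma ee_eq_zero_of_card {n : ℕ} {k : ℤ} {S : Finset (Fin n)} (h : (S.card : ℤ) < k) :
    ee n k S = 0 := by
  rw [ee, if_pos (by omega), Finset.powersetCard_eq_empty.2 (by omega), Finset.sum_empty]

lemma te_zero (n : ℕ) (S : Finset (Fin n)) : te n 0 S = 1 := by
  simp [te]
  rfl

lemma te_empty {n : ℕ} {k : ℤ} (hk : 1 ≤ k) : te n k (∅ : Finset (Fin n)) = 0 := by
  rw [te, if_pos (by omega)]
  rw [show k.toNat = (k.toNat - 1) + 1 by omega]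
  simp

lemma ee_insert {n : ℕ} {a : Fin n} {S : Finset (Fin n)} (ha : a ∉ S) {k : ℤ} (hk : 1 ≤ k) :
    ee n k (insert a S) = X a * ee n (k - 1) S + ee n k S := by
  rw [ee, ee, ee, if_pos (by omega), if_pos (by omega), if_pos (by omega)]
  rw [show k.toNat = (k - 1).toNat + 1 by omega]
  rw [Finset.powersetCard_succ_insert ha]
  rw [Finset.sum_union]
  · rw [Finset.sum_image]
    · rw [Finset.mul_sum]
      rw [add_comm]
      congr 1
      apply Finset.sum_congr rfl
      intro A hA
      rw [Finset.mem_powersetCard] at hA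
      rw [Finset.prod_insert (fun hmem => ha (hA.1 hmem))]
    · intro A hA B hB hAB
      rw [Finset.mem_coe, Finset.mem_powersetCard] at hA hB
      have haA : a ∉ A := fun hmem => ha (hA.1 hmem)
      have haB : a ∉ B := fun hmem => ha (hB.1 hmem)
      rw [← Finset.erase_insert haA, ← Finset.erase_insert haB, hAB]
  · rw [Finset.disjoint_left]
    intro B hB hB'
    rw [Finset.mem_powersetCard] at hB
    rw [Finset.mem_image] at hB'
    obtain ⟨A, hA, rfl⟩ := hB'
    exact ha (hB.1 (Finset.mem_insert_self a A))

lemma sym_insert_eq {α : Type*} [DecidableEq α] {a : α} {S : Finset α} (ha : a ∉ S) (m : ℕ) :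
    (insert a S).sym (m + 1) =
      ((insert a S).sym m).image (Sym.cons a) ∪ S.sym (m + 1) := by
  ext μ
  simp only [Finset.mem_union, Finset.mem_image, Finset.mem_sym_iff]
  constructor
  · intro h
    by_cases hm : a ∈ μ
    · left
      exact ⟨μ.erase a hm, fun b hb => h b (by rw [← Sym.cons_erase hm]; exact Sym.mem_cons_of_mem hb), Sym.cons_erase hm⟩
    · right
      intro b hb
      rcases Finset.mem_insert.1 (h b hb) with rfl | h'
      · exact absurd hb hm
      · exact h'
  · rintro (⟨μ', hμ', rfl⟩ | h)
    · intro b hb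
      rcases Sym.mem_cons.1 hb with h' | hb'
      · exact h' ▸ Finset.mem_insert_self a S
      · exact hμ' b hb'
    · exact fun b hb => Finset.mem_insert_of_mem (h b hb)

lemma te_insert {n : ℕ} {a : Fin n} {S : Finset (Fin n)} (ha : a ∉ S) {k : ℤ} (hk : 1 ≤ k) :
    te n k (insert a S) = X a * te n (k - 1) (insert a S) + te n k S := by
  rw [te, te, te, if_pos (by omega), if_pos (by omega), if_pos (by omega)]
  rw [show k.toNat = (k - 1).toNat + 1 by omega]
  rw [sym_insert_eq ha]
  rw [Finset.sum_union]
  · rw [Finset.sum_image]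
    · rw [Finset.mul_sum]
      congr 1
      apply Finset.sum_congr rfl
      intro μ hμ
      rw [Sym.coe_cons, Multiset.map_cons, Multiset.prod_cons]
    · intro μ1 h1 μ2 h2 h12
      exact (Sym.cons_inj_right a μ1 μ2).1 h12
  · rw [Finset.disjoint_left]
    intro μ hμ hμ'
    rw [Finset.mem_image] at hμ
    obtain ⟨μ0, _, rfl⟩ := hμ
    rw [Finset.mem_sym_iff] at hμ'
    exact ha (hμ' a (Sym.mem_cons_self a μ0))

noncomputable def Gaux (n r s d : ℕ) (i : ℕ) : MvPolynomial (Fin n) ℤ :=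
  if h : i < d ∧ s + d ≤ r ∧ r ≤ n then
    (-1) ^ i * (X (⟨s + i, by omega⟩ : Fin n) *
      (ee n ((d : ℤ) - 1 - i) (seg n (s + i + 2) r) * te n i (seg n (s + i + 1) n)))
  else 0

lemma Qgen (n r d : ℕ) (hd : 0 < d) (hrn : r ≤ n) :
    ∀ k s : ℕ, s + d + k = r + 1 →
    ee n d (seg n (s + 1) r) =
      (-1 : MvPolynomial (Fin n) ℤ) ^ d * te n d (seg n (r + 1) n) +
        ∑ t ∈ Finset.Icc 1 d,
          (-1 : MvPolynomial (Fin n) ℤ) ^ (t + 1) *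
            (ee n ((d : ℤ) - t) (seg n (s + t + 1) r) * te n t (seg n (s + t) n)) := by
  intro k
  induction k with
  | zero =>
    intro s hs
    have hL : ee n d (seg n (s + 1) r) = 0 := by
      apply ee_eq_zero_of_card
      rw [seg_card (by omega) hrn]
      omega
    rw [hL, Finset.sum_eq_single_of_mem d (Finset.mem_Icc.2 ⟨hd, le_rfl⟩)]
    · rw [show s + d = r + 1 by omega, show (d : ℤ) - (d : ℕ) = 0 by norm_num, ee_zero,
        one_mul, pow_succ]
      ring
    · intro t ht hne
      have h0 : ee n ((d : ℤ) - t) (seg n (s + t + 1) r) = 0 := by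
        apply ee_eq_zero_of_card
        rw [seg_card (by omega) hrn]
        rw [Finset.mem_Icc] at ht
        omega
      rw [h0, zero_mul, mul_zero]
  | succ k ih =>
    intro s hs
    have hsd : s + d ≤ r := by omega
    have IH := ih (s + 1) (by omega)
    have hterm : ∀ i ∈ Finset.range d,
        ((-1 : MvPolynomial (Fin n) ℤ) ^ (1 + i + 1) *
            (ee n ((d : ℤ) - (1 + i : ℕ)) (seg n (s + (1 + i) + 1) r) *
              te n (1 + i : ℕ) (seg n (s + (1 + i)) n)) -
          (-1 : MvPolynomial (Fin n) ℤ) ^ (1 + i + 1) *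
            (ee n ((d : ℤ) - (1 + i : ℕ)) (seg n (s + 1 + (1 + i) + 1) r) *
              te n (1 + i : ℕ) (seg n (s + 1 + (1 + i)) n))) =
        Gaux n r s d i - Gaux n r s d (i + 1) := by
      intro i hi
      rw [Finset.mem_range] at hi
      simp only [show 1 + i = i + 1 by omega]
      simp only [show s + (i + 1) = s + i + 1 by omega, show s + 1 + (i + 1) = s + i + 2 by omega,
        show s + (i + 1) + 1 = s + i + 2 by omega, show s + 1 + (i + 1) + 1 = s + i + 3 by omega]
      have hsin : s + i < n := by omega
      have hseg : seg n (s + i + 1) n = insert (⟨s + i, hsin⟩ : Fin n) (seg n (s + i + 2) n) :=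
        seg_insert (by omega) (by omega) le_rfl
      have hne : (⟨s + i, hsin⟩ : Fin n) ∉ seg n (s + i + 2) n :=
        not_mem_seg (a := s + i + 1) (by omega) (by omega)
      have hH := te_insert hne (k := ((i + 1 : ℕ) : ℤ)) (by push_cast; omega)
      rw [← hseg] at hH
      rw [show ((i + 1 : ℕ) : ℤ) - 1 = ((i : ℕ) : ℤ) by push_cast; ring] at hH
      by_cases hlast : i + 1 = d
      · have hdeg : (d : ℤ) - ((i + 1 : ℕ) : ℤ) = 0 := by omega
        have hGi : Gaux n r s d i =
            (-1) ^ i * (X (⟨s + i, hsin⟩ : Fin n) *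
              (ee n ((d : ℤ) - 1 - i) (seg n (s + i + 2) r) * te n i (seg n (s + i + 1) n))) := by
          rw [Gaux, dif_pos ⟨hi, hsd, hrn⟩]
        have hGi1 : Gaux n r s d (i + 1) = 0 := by rw [Gaux, dif_neg (by omega)]
        rw [hdeg, ee_zero, ee_zero, hGi, hGi1,
          show (d : ℤ) - 1 - (i : ℕ) = 0 by push_cast; omega, ee_zero, hH]
        ring
      · have hlt : i + 1 < d := by omega
        have hsegr : seg n (s + i + 2) r = insert (⟨s + i + 1, by omega⟩ : Fin n)
            (seg n (s + i + 3) r) := seg_insert (by omega) (by omega) hrn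
        have hner : (⟨s + i + 1, by omega⟩ : Fin n) ∉ seg n (s + i + 3) r :=
          not_mem_seg (a := s + i + 2) (by omega) (by omega)
        have hE := ee_insert hner (k := (d : ℤ) - ((i + 1 : ℕ) : ℤ)) (by push_cast; omega)
        rw [← hsegr] at hE
        have hGi : Gaux n r s d i =
            (-1) ^ i * (X (⟨s + i, hsin⟩ : Fin n) *
              (ee n ((d : ℤ) - ((i + 1 : ℕ) : ℤ)) (seg n (s + i + 2) r) *
                te n i (seg n (s + i + 1) n))) := by
          rw [Gaux, dif_pos ⟨hi, hsd, hrn⟩,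
            show (d : ℤ) - 1 - (i : ℕ) = (d : ℤ) - ((i + 1 : ℕ) : ℤ) by push_cast; ring]
        have hGi1 : Gaux n r s d (i + 1) =
            (-1) ^ (i + 1) * (X (⟨s + i + 1, by omega⟩ : Fin n) *
              (ee n ((d : ℤ) - ((i + 1 : ℕ) : ℤ) - 1) (seg n (s + i + 3) r) *
                te n (i + 1 : ℕ) (seg n (s + i + 2) n))) := by
          rw [Gaux, dif_pos ⟨hlt, hsd, hrn⟩,
            show (d : ℤ) - 1 - ((i + 1 : ℕ) : ℤ) = (d : ℤ) - ((i + 1 : ℕ) : ℤ) - 1 by ring]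
          rfl
        rw [hGi, hGi1, hE, hH]
        ring
    have hdiff :
        (∑ t ∈ Finset.Icc 1 d,
            (-1 : MvPolynomial (Fin n) ℤ) ^ (t + 1) *
              (ee n ((d : ℤ) - t) (seg n (s + t + 1) r) * te n t (seg n (s + t) n))) -
          (∑ t ∈ Finset.Icc 1 d,
            (-1 : MvPolynomial (Fin n) ℤ) ^ (t + 1) *
              (ee n ((d : ℤ) - t) (seg n (s + 1 + t + 1) r) * te n t (seg n (s + 1 + t) n))) =
          ee n d (seg n (s + 1) r) - ee n d (seg n (s + 1 + 1) r) := by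
      rw [← Finset.sum_sub_distrib, ← Finset.Ico_add_one_right_eq_Icc, Finset.sum_Ico_eq_sum_range,
        show d + 1 - 1 = d by omega]
      rw [Finset.sum_congr rfl hterm, Finset.sum_range_sub' (Gaux n r s d) d]
      have hGd : Gaux n r s d d = 0 := by rw [Gaux, dif_neg (by omega)]
      have hG0 : Gaux n r s d 0 =
          X (⟨s, by omega⟩ : Fin n) * ee n ((d : ℤ) - 1) (seg n (s + 2) r) := by
        rw [Gaux, dif_pos ⟨hd, hsd, hrn⟩]
        simp [te_zero]
      have hrec : ee n (d : ℤ) (seg n (s + 1) r) =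
          X (⟨s, by omega⟩ : Fin n) * ee n ((d : ℤ) - 1) (seg n (s + 2) r) +
            ee n (d : ℤ) (seg n (s + 1 + 1) r) := by
        rw [seg_insert (a := s + 1) (by omega) (by omega) hrn,
          ee_insert (not_mem_seg (a := s + 1) (by omega) (by omega)) (by exact_mod_cast hd)]
        simp only [show s + 1 - 1 = s by omega, show s + 1 + 1 = s + 2 by omega]
      rw [hGd, hG0, sub_zero, hrec]
      ring
    linear_combination IH - hdiff

theorem stmt5 (n d r : ℕ) (hd : 0 < d) (hdr : d ≤ r) (hrn : r ≤ n) :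
    ee n d (seg n 1 r) =
      (-1 : MvPolynomial (Fin n) ℤ) ^ d * te n d (seg n (r + 1) n) +
        ∑ t ∈ Finset.Icc 1 d,
          (-1 : MvPolynomial (Fin n) ℤ) ^ (t + 1) *
            (ee n ((d : ℤ) - t) (seg n (t + 1) r) * te n t (seg n t n)) := by
  have := Qgen n r d hd hrn (r + 1 - d) 0 (by omega)
  simpa using this
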